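/- Let B be an n×n integer matrix and q(t) = det(B − tI + t·e_n e_n*) = Σ q_i t^i (i.e., the variable t is removed from the (n,n) diagonal entry). Then max_i |q_i| ≤ 2·(2√n · max_{i,j}|B_{ij}|)^n. -/

import Mathlib

open Polynomial Matrix Finset
open scoped ComplexOrder

/-- The maximum absolute value of the entries of an integer matrix. -/
def maxEntry {m n : ℕ} (A : Matrix (Fin m) (Fin n) ℤ) : ℕ :=
  (Finset.univ ×ˢ Finset.univ).sup fun p : Fin m × Fin n => (A p.1 p.2).natAbs

open Polynomial Matrix Finset

/-- AM-GM: product ≤ (sum/m)^m. -/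
lemma my_prod_le_sum_div_pow {m : ℕ} (hm : 0 < m) (x : Fin m → ℝ) (hx : ∀ i, 0 ≤ x i) :
    ∏ i, x i ≤ ((∑ i, x i) / m) ^ m := by
  have hw : ∀ i ∈ (univ : Finset (Fin m)), (0:ℝ) ≤ (m:ℝ)⁻¹ := fun _ _ => by positivity
  have hws : ∑ _i : Fin m, (m:ℝ)⁻¹ = 1 := by
    simp [Finset.sum_const, Finset.card_univ]
    field_simp
  have h := Real.geom_mean_le_arith_mean_weighted univ (fun _ => (m:ℝ)⁻¹) x hw hws
    (fun i _ => hx i)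
  have hprod : ∏ i, x i ^ ((m:ℝ)⁻¹) = (∏ i, x i) ^ ((m:ℝ)⁻¹) :=
    (Real.finset_prod_rpow univ x (fun i _ => hx i) _)
  rw [hprod] at h
  have hsum : ∑ i, (m:ℝ)⁻¹ * x i = (∑ i, x i) / m := by
    rw [← Finset.mul_sum]; ring
  rw [hsum] at h
  have hP : (0:ℝ) ≤ ∏ i, x i := Finset.prod_nonneg fun i _ => hx i
  calc ∏ i, x i = ((∏ i, x i) ^ ((m:ℝ)⁻¹)) ^ (m:ℕ) := by
        rw [← Real.rpow_natCast ((∏ i, x i) ^ ((m:ℝ)⁻¹)) m, ← Real.rpow_mul hP,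
          inv_mul_cancel₀ (by exact_mod_cast hm.ne'), Real.rpow_one]
    _ ≤ ((∑ i, x i) / m) ^ (m:ℕ) := pow_le_pow_left₀ (Real.rpow_nonneg hP _) h m
open scoped ComplexOrder

lemma my_trace_eq_sum_eigenvalues {m : ℕ} {A : Matrix (Fin m) (Fin m) ℂ} (hA : A.IsHermitian) :
    A.trace = ∑ i, (hA.eigenvalues i : ℂ) := by
  conv_lhs => rw [hA.spectral_theorem]
  rw [Unitary.conjStarAlgAut_apply, Matrix.trace_mul_cycle]
  have h1 : star (hA.eigenvectorUnitary : Matrix (Fin m) (Fin m) ℂ) *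
      (hA.eigenvectorUnitary : Matrix (Fin m) (Fin m) ℂ) = 1 := Unitary.coe_star_mul_self _
  rw [h1, Matrix.one_mul, Matrix.trace_diagonal]
  rfl

lemma my_hadamard {m : ℕ} (A : Matrix (Fin m) (Fin m) ℂ) {c : ℝ}
    (hc : ∀ i j, ‖A i j‖ ≤ c) :
    ‖A.det‖ ≤ (Real.sqrt m * c) ^ m := by
  rcases Nat.eq_zero_or_pos m with hm | hm
  · subst hm; simp [Matrix.det_fin_zero]
  have hc0 : 0 ≤ c := le_trans (norm_nonneg _) (hc ⟨0, hm⟩ ⟨0, hm⟩)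
  set P := A * Aᴴ with hP
  have hPsd : P.PosSemidef := Matrix.posSemidef_self_mul_conjTranspose A
  set μ := hPsd.1.eigenvalues with hμ
  have hμ0 : ∀ i, 0 ≤ μ i := hPsd.eigenvalues_nonneg
  -- |det A|^2 = ∏ μ
  have hdet : (‖A.det‖) ^ 2 = ∏ i, μ i := by
    have h1 : P.det = ((Complex.normSq A.det : ℝ) : ℂ) := by
      rw [hP, Matrix.det_mul, Matrix.det_conjTranspose, Complex.star_def, Complex.mul_conj]
    have h2 : P.det = ((∏ i, μ i : ℝ) : ℂ) := by
      rw [hPsd.1.det_eq_prod_eigenvalues]; push_cast; rfl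
    have h3 : (Complex.normSq A.det : ℝ) = ∏ i, μ i := by
      exact_mod_cast h1.symm.trans h2
    rw [Complex.sq_norm, h3]
  -- trace bound
  have htr : ∑ i, μ i ≤ (m : ℝ) * ((m : ℝ) * c ^ 2) := by
    have h4 : ((∑ i, μ i : ℝ) : ℂ) = P.trace := by
      rw [my_trace_eq_sum_eigenvalues hPsd.1]; push_cast; rfl
    have h5 : P.trace = ((∑ i, ∑ j, Complex.normSq (A i j) : ℝ) : ℂ) := by
      rw [Matrix.trace]
      push_cast
      refine Finset.sum_congr rfl fun i _ => ?_
      rw [Matrix.diag_apply, hP, Matrix.mul_apply]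
      refine Finset.sum_congr rfl fun j _ => ?_
      rw [Matrix.conjTranspose_apply, Complex.star_def, Complex.mul_conj]
    have h6 : (∑ i, μ i : ℝ) = ∑ i, ∑ j, Complex.normSq (A i j) := by
      exact_mod_cast h4.trans h5
    rw [h6]
    calc ∑ i, ∑ j, Complex.normSq (A i j) ≤ ∑ _i : Fin m, ∑ _j : Fin m, c ^ 2 := by
          refine Finset.sum_le_sum fun i _ => Finset.sum_le_sum fun j _ => ?_
          rw [← Complex.sq_norm]
          exact pow_le_pow_left₀ (norm_nonneg _) (hc i j) 2
      _ = (m : ℝ) * ((m : ℝ) * c ^ 2) := by simp [Finset.sum_const, Finset.card_univ]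
  have hamgm := my_prod_le_sum_div_pow hm μ hμ0
  have hdiv : (∑ i, μ i) / m ≤ (m : ℝ) * c ^ 2 := by
    rw [div_le_iff₀ (by exact_mod_cast hm : (0:ℝ) < m)]
    linarith [htr]
  have key : (‖A.det‖) ^ 2 ≤ ((Real.sqrt m * c) ^ m) ^ 2 := by
    rw [hdet]
    calc ∏ i, μ i ≤ ((∑ i, μ i) / m) ^ m := hamgm
      _ ≤ ((m:ℝ) * c ^ 2) ^ m := by
          exact pow_le_pow_left₀
            (div_nonneg (Finset.sum_nonneg fun i _ => hμ0 i) (by positivity)) hdiv m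
      _ = ((Real.sqrt m * c) ^ m) ^ 2 := by
          rw [← pow_mul, mul_comm m 2, pow_mul]
          congr 1
          rw [mul_pow, Real.sq_sqrt (by positivity : (0:ℝ) ≤ (m:ℝ))]
  have h7 : (0:ℝ) ≤ (Real.sqrt m * c) ^ m := by positivity
  exact (pow_le_pow_iff_left₀ (norm_nonneg _) h7 two_ne_zero).mp key

lemma my_coeff_bound {p : Polynomial ℂ} {n : ℕ} (hdeg : p.natDegree ≤ n) {R Cb : ℝ}
    (hR : 0 ≤ R) (h : ∀ z : ℂ, ‖z‖ = R → ‖p.eval z‖ ≤ Cb)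
    {i : ℕ} (hi : i ≤ n) :
    ‖p.coeff i‖ * R ^ i ≤ Cb := by
  set m : ℕ := n + 1 with hm
  have hm0 : (m : ℂ) ≠ 0 := Nat.cast_ne_zero.mpr (Nat.succ_ne_zero n)
  set ζ : ℂ := Complex.exp (2 * Real.pi * Complex.I / m) with hζdef
  have hζ : IsPrimitiveRoot ζ m := Complex.isPrimitiveRoot_exp m (Nat.succ_ne_zero n)
  have hζ0 : ζ ≠ 0 := hζ.ne_zero (Nat.succ_ne_zero n)
  have hζabs : ‖ζ‖ = 1 := by
    rw [hζdef, Complex.norm_exp]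
    have : (2 * Real.pi * Complex.I / m).re = 0 := by
      simp [Complex.div_re, Complex.mul_re]
    rw [this, Real.exp_zero]
  have hζm : ζ ^ m = 1 := hζ.pow_eq_one
  -- key identity
  have key : ∑ k ∈ Finset.range m, p.eval ((R : ℂ) * ζ ^ k) * (ζ⁻¹) ^ (k * i)
      = (m : ℂ) * (p.coeff i * (R : ℂ) ^ i) := by
    have heval : ∀ k, p.eval ((R : ℂ) * ζ ^ k)
        = ∑ j ∈ Finset.range m, p.coeff j * ((R : ℂ) * ζ ^ k) ^ j := fun k =>
      Polynomial.eval_eq_sum_range' (lt_of_le_of_lt hdeg (Nat.lt_succ_self n)) _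
    calc ∑ k ∈ Finset.range m, p.eval ((R : ℂ) * ζ ^ k) * (ζ⁻¹) ^ (k * i)
        = ∑ k ∈ Finset.range m, ∑ j ∈ Finset.range m,
            p.coeff j * (R : ℂ) ^ j * ((ζ ^ j * (ζ⁻¹) ^ i) ^ k) := by
          refine Finset.sum_congr rfl fun k _ => ?_
          rw [heval k, Finset.sum_mul]
          refine Finset.sum_congr rfl fun j _ => ?_
          ring
      _ = ∑ j ∈ Finset.range m, p.coeff j * (R : ℂ) ^ j *
            (∑ k ∈ Finset.range m, (ζ ^ j * (ζ⁻¹) ^ i) ^ k) := by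
          rw [Finset.sum_comm]
          exact Finset.sum_congr rfl fun j _ => by rw [Finset.mul_sum]
      _ = (m : ℂ) * (p.coeff i * (R : ℂ) ^ i) := by
          rw [Finset.sum_eq_single i]
          · rw [inv_pow, mul_inv_cancel₀ (pow_ne_zero i hζ0)]
            simp only [one_pow]
            rw [Finset.sum_const, Finset.card_range, nsmul_eq_mul]
            push_cast; ring
          · intro j hj hji
            have hjm : j < m := Finset.mem_range.mp hj
            have him : i < m := Nat.lt_succ_of_le hi
            have hu1 : (ζ ^ j * (ζ⁻¹) ^ i) ≠ 1 := by
              intro hcon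
              apply hji
              have : ζ ^ j = ζ ^ i := by
                rw [inv_pow, mul_inv_eq_one₀ (pow_ne_zero i hζ0)] at hcon
                exact hcon
              exact hζ.pow_inj hjm him this
            have hum : (ζ ^ j * (ζ⁻¹) ^ i) ^ m = 1 := by
              rw [mul_pow, ← pow_mul, ← pow_mul, mul_comm j m, mul_comm i m, pow_mul, pow_mul,
                hζm, inv_pow, hζm]
              simp
            rw [geom_sum_eq hu1, hum, sub_self, zero_div, mul_zero]
          · intro hcon
            exact absurd (Finset.mem_range.mpr (Nat.lt_succ_of_le hi)) hcon
  -- bound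
  have habs : (m : ℝ) * (‖p.coeff i‖ * R ^ i) ≤ (m : ℝ) * Cb := by
    have h1 : ‖(m : ℂ) * (p.coeff i * (R : ℂ) ^ i)‖
        = (m : ℝ) * (‖p.coeff i‖ * R ^ i) := by
      rw [norm_mul, norm_mul, norm_pow, Complex.norm_natCast,
        Complex.norm_real, Real.norm_eq_abs, abs_of_nonneg hR]
    rw [← h1, ← key]
    calc ‖∑ k ∈ Finset.range m, p.eval ((R : ℂ) * ζ ^ k) * (ζ⁻¹) ^ (k * i)‖
        ≤ ∑ k ∈ Finset.range m, ‖p.eval ((R : ℂ) * ζ ^ k) * (ζ⁻¹) ^ (k * i)‖ := by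
          exact norm_sum_le _ _
      _ ≤ ∑ _k ∈ Finset.range m, Cb := by
          refine Finset.sum_le_sum fun k _ => ?_
          rw [norm_mul, norm_pow, norm_inv, hζabs]
          simp only [inv_one, one_pow, mul_one]
          refine h _ ?_
          rw [norm_mul, norm_pow, hζabs, one_pow, mul_one, Complex.norm_real, Real.norm_eq_abs,
            abs_of_nonneg hR]
      _ = (m : ℝ) * Cb := by rw [Finset.sum_const, Finset.card_range, nsmul_eq_mul]
  have hmpos : (0:ℝ) < m := by exact_mod_cast Nat.succ_pos n
  exact le_of_mul_le_mul_left habs hmpos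

theorem stmt9 {n : ℕ} (hn : 0 < n) (B : Matrix (Fin n) (Fin n) ℤ) (i : ℕ) :
    ((((B.map Polynomial.C -
            (Polynomial.X : Polynomial ℤ) • (1 : Matrix (Fin n) (Fin n) (Polynomial ℤ)) +
            Matrix.single (⟨n - 1, Nat.sub_lt hn Nat.one_pos⟩ : Fin n)
              (⟨n - 1, Nat.sub_lt hn Nat.one_pos⟩ : Fin n) (Polynomial.X : Polynomial ℤ)).det).coeff
        i).natAbs : ℝ) ≤
      2 * (2 * Real.sqrt n * (maxEntry B : ℝ)) ^ n := by
  set lst : Fin n := ⟨n - 1, Nat.sub_lt hn Nat.one_pos⟩ with hlst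
  set M : Matrix (Fin n) (Fin n) (Polynomial ℤ) :=
    B.map Polynomial.C - (Polynomial.X : Polynomial ℤ) • 1 +
      Matrix.single lst lst (Polynomial.X : Polynomial ℤ) with hMdef
  set a : ℕ := maxEntry B with hadef
  have ha : ∀ j k, (B j k).natAbs ≤ a := by
    intro j k
    have hmem : ((j, k) : Fin n × Fin n) ∈ Finset.univ ×ˢ Finset.univ :=
      Finset.mem_product.mpr ⟨Finset.mem_univ j, Finset.mem_univ k⟩
    exact Finset.le_sup (f := fun p : Fin n × Fin n => (B p.1 p.2).natAbs) hmem
  -- entry formula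
  have hentry : ∀ j k, M j k = Polynomial.C (B j k) +
      (if j = k ∧ j ≠ lst then -Polynomial.X else 0) := by
    intro j k
    simp only [hMdef, Matrix.add_apply, Matrix.sub_apply, Matrix.map_apply, Matrix.smul_apply,
      Matrix.one_apply, Matrix.single, Matrix.of_apply, smul_eq_mul]
    by_cases hjk : j = k
    · subst hjk
      by_cases hl : j = lst
      · subst hl; simp
      · rw [if_neg (fun h : lst = j ∧ lst = j => hl h.1.symm)]
        simp [hl, sub_eq_add_neg]
    · have h1 : ¬(lst = j ∧ lst = k) := fun h => hjk (h.1.symm.trans h.2)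
      have h2 : ¬(j = k ∧ j ≠ lst) := fun h => hjk h.1
      simp [hjk, h1, h2]
  -- degree bound
  have hdeg : M.det.natDegree ≤ n := by
    have hM2 : M = (Polynomial.X : Polynomial ℤ) •
        (Matrix.single lst lst (1:ℤ) - 1).map Polynomial.C + B.map Polynomial.C := by
      refine Matrix.ext fun j k => ?_
      rw [hentry]
      simp only [Matrix.add_apply, Matrix.smul_apply, Matrix.map_apply, Matrix.sub_apply,
        Matrix.one_apply, Matrix.single, Matrix.of_apply, smul_eq_mul]
      by_cases hjk : j = k
      · subst hjk
        by_cases hl : j = lst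
        · subst hl; simp
        · rw [if_pos ⟨rfl, hl⟩, if_neg (fun h : lst = j ∧ lst = j => hl h.1.symm), if_pos rfl]
          simp [add_comm]
      · have h1 : ¬(lst = j ∧ lst = k) := fun h => hjk (h.1.symm.trans h.2)
        have h2 : ¬(j = k ∧ j ≠ lst) := fun h => hjk h.1
        simp [hjk, h1, h2]
    rw [hM2]
    simpa using Polynomial.natDegree_det_X_add_C_le
      (Matrix.single lst lst (1:ℤ) - 1) B
  by_cases ha0 : a = 0
  · -- B = 0, last row of M is zero
    have hB0 : ∀ j k, B j k = 0 := fun j k =>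
      Int.natAbs_eq_zero.mp (Nat.le_zero.mp (ha0 ▸ ha j k))
    have hdet0 : M.det = 0 := by
      apply Matrix.det_eq_zero_of_row_eq_zero lst
      intro k
      rw [hentry, hB0]
      simp
    rw [hdet0]
    simp only [Polynomial.coeff_zero, Int.natAbs_zero, Nat.cast_zero]
    rw [ha0]
    simp [zero_pow hn.ne']
  · have ha1 : 1 ≤ a := Nat.one_le_iff_ne_zero.mpr ha0
    rcases le_or_gt i n with hi | hi
    · -- main case
      set p : Polynomial ℂ := M.det.map (Int.castRingHom ℂ) with hpdef
      have hpdeg : p.natDegree ≤ n := Polynomial.natDegree_map_le.trans hdeg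
      have heval : ∀ z : ℂ, ‖z‖ = (a : ℝ) →
          ‖p.eval z‖ ≤ (Real.sqrt n * ((a : ℝ) + (a : ℝ))) ^ n := by
        intro z hz
        set φ : Polynomial ℤ →+* ℂ :=
          (Polynomial.evalRingHom z).comp (Polynomial.mapRingHom (Int.castRingHom ℂ)) with hφ
        have h1 : p.eval z = (M.map φ).det := by
          rw [← RingHom.mapMatrix_apply, ← RingHom.map_det]
          simp [hφ, hpdef, Polynomial.eval_map]
        rw [h1]
        refine my_hadamard (M.map φ) ?_
        intro j k
        rw [Matrix.map_apply, hentry, map_add]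
        refine (norm_add_le _ _).trans ?_
        have h2 : ‖φ (Polynomial.C (B j k))‖ ≤ (a : ℝ) := by
          have h3 : φ (Polynomial.C (B j k)) = ((B j k : ℤ) : ℂ) := by simp [hφ]
          rw [h3, Complex.norm_intCast, ← Int.cast_abs]
          have h5 : |B j k| = ((B j k).natAbs : ℤ) := Int.abs_eq_natAbs _
          rw [h5]
          exact_mod_cast ha j k
        have h4 : ‖φ (if j = k ∧ j ≠ lst then -Polynomial.X else 0)‖ ≤ (a : ℝ) := by
          split_ifs
          · rw [map_neg, norm_neg]
            have h6 : φ (Polynomial.X : Polynomial ℤ) = z := by simp [hφ]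
            rw [h6, hz]
          · rw [map_zero, norm_zero]
            positivity
        linarith
      have hbound := my_coeff_bound hpdeg (by positivity : (0:ℝ) ≤ (a:ℝ)) heval hi
      have hcoeff : p.coeff i = ((M.det.coeff i : ℤ) : ℂ) := by
        rw [hpdef, Polynomial.coeff_map]; rfl
      have habs : ‖p.coeff i‖ = ((M.det.coeff i).natAbs : ℝ) := by
        rw [hcoeff, Complex.norm_intCast, ← Int.cast_abs, Int.abs_eq_natAbs, Int.cast_natCast]
      have hge1 : (1:ℝ) ≤ (a:ℝ) ^ i := one_le_pow₀ (by exact_mod_cast ha1)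
      have hfin : ((M.det.coeff i).natAbs : ℝ) ≤ (Real.sqrt n * ((a:ℝ) + (a:ℝ))) ^ n := by
        calc ((M.det.coeff i).natAbs : ℝ) = ‖p.coeff i‖ := habs.symm
          _ ≤ ‖p.coeff i‖ * (a:ℝ) ^ i :=
              le_mul_of_one_le_right (norm_nonneg _) hge1
          _ ≤ _ := hbound
      have heq : (Real.sqrt n * ((a:ℝ) + (a:ℝ))) ^ n = (2 * Real.sqrt n * (a:ℝ)) ^ n := by
        ring_nf
      have hnn : (0:ℝ) ≤ (2 * Real.sqrt n * (a:ℝ)) ^ n := by positivity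
      rw [heq] at hfin
      linarith
    · -- i > n : coefficient is zero
      have : M.det.coeff i = 0 :=
        Polynomial.coeff_eq_zero_of_natDegree_lt (lt_of_le_of_lt hdeg hi)
      rw [this]
      simp only [Int.natAbs_zero, Nat.cast_zero]
      positivity
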